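/- Let B = x_{i_1}⋯x_{i_n} be a block and let j ≥ 0 with j ≠ i_1. Then there exist integers k ≥ 0 and r ≥ 0 such that x_j^{-1} B = B' x_r^{-1} holds in F, where B' = x_{i_1+k}⋯x_{i_n+k} is the translation of B by k. -/

import Mathlib

set_option maxHeartbeats 1000000

noncomputable section

/-- The unit interval `[0,1]` as a type. -/
abbrev I : Type := Set.Icc (0:ℝ) 1

/-- The underlying function of the generator `x₀` of Thompson's group `F`. -/
def x0fun (t : ℝ) : ℝ := if t ≤ 1/4 then 2*t else if t ≤ 1/2 then t + 1/4 else t/2 + 1/2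

/-- The inverse of `x0fun`. -/
def x0inv (t : ℝ) : ℝ := if t ≤ 1/2 then t/2 else if t ≤ 3/4 then t - 1/4 else 2*t - 1

/-- The underlying function of the generator `x₁` of Thompson's group `F`. -/
def x1fun (t : ℝ) : ℝ :=
  if t ≤ 1/2 then t else if t ≤ 5/8 then 2*t - 1/2 else if t ≤ 3/4 then t + 1/8 else t/2 + 1/2

/-- The inverse of `x1fun`. -/
def x1inv (t : ℝ) : ℝ :=
  if t ≤ 1/2 then t else if t ≤ 3/4 then t/2 + 1/4 else if t ≤ 7/8 then t - 1/8 else 2*t - 1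

/-- The generator `x₀` of Thompson's group `F`, as a bijection of `[0,1]`. -/
def x₀ : Equiv.Perm I where
  toFun t := ⟨x0fun t.1, by
    obtain ⟨h0, h1⟩ := Set.mem_Icc.mp t.2
    simp only [Set.mem_Icc, x0fun]
    split_ifs <;> constructor <;> linarith⟩
  invFun t := ⟨x0inv t.1, by
    obtain ⟨h0, h1⟩ := Set.mem_Icc.mp t.2
    simp only [Set.mem_Icc, x0inv]
    split_ifs <;> constructor <;> linarith⟩
  left_inv t := by
    obtain ⟨h0, h1⟩ := Set.mem_Icc.mp t.2
    apply Subtype.ext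
    show x0inv (x0fun t.1) = t.1
    simp only [x0fun, x0inv]
    split_ifs <;> linarith
  right_inv t := by
    obtain ⟨h0, h1⟩ := Set.mem_Icc.mp t.2
    apply Subtype.ext
    show x0fun (x0inv t.1) = t.1
    simp only [x0fun, x0inv]
    split_ifs <;> linarith

/-- The generator `x₁` of Thompson's group `F`, as a bijection of `[0,1]`. -/
def x₁ : Equiv.Perm I where
  toFun t := ⟨x1fun t.1, by
    obtain ⟨h0, h1⟩ := Set.mem_Icc.mp t.2
    simp only [Set.mem_Icc, x1fun]
    split_ifs <;> constructor <;> linarith⟩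
  invFun t := ⟨x1inv t.1, by
    obtain ⟨h0, h1⟩ := Set.mem_Icc.mp t.2
    simp only [Set.mem_Icc, x1inv]
    split_ifs <;> constructor <;> linarith⟩
  left_inv t := by
    obtain ⟨h0, h1⟩ := Set.mem_Icc.mp t.2
    apply Subtype.ext
    show x1inv (x1fun t.1) = t.1
    simp only [x1fun, x1inv]
    split_ifs <;> linarith
  right_inv t := by
    obtain ⟨h0, h1⟩ := Set.mem_Icc.mp t.2
    apply Subtype.ext
    show x1fun (x1inv t.1) = t.1
    simp only [x1fun, x1inv]
    split_ifs <;> linarith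

/-- Composition in Thompson's group `F` is from left to right: the product `f·g` in the paper
is the function `t ↦ g (f t)`.  In Lean, `Equiv.Perm` multiplication is composition from right
to left: `(f * g) t = f (g t)`.  Hence a paper product `a₁ a₂ ⋯ aₙ` corresponds to the Lean
product `aₙ * ⋯ * a₂ * a₁`.

`x i` is the standard generator `x_i` of Thompson's group `F`: here `x_0, x_1` are the explicit
piecewise-linear maps, and for `i ≥ 1`, `x_{i+1} = x_0^{-i} x_1 x_0^{i}` (left-to-right
composition), which in Lean's convention is `x₀ ^ i * x₁ * (x₀ ^ i)⁻¹`. -/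
def x (i : ℕ) : Equiv.Perm I := if i = 0 then x₀ else x₀ ^ (i-1) * x₁ * (x₀ ^ (i-1))⁻¹

/-- Thompson's group `F`, realized as the group of increasing piecewise-linear homeomorphisms of
`[0,1]` with dyadic breakpoints and slopes powers of 2; it is generated by `x_0` and `x_1`. -/
def F : Subgroup (Equiv.Perm I) := Subgroup.closure {x 0, x 1}

/-- The subgroup `G = ⟨x_0x_2, x_1x_2⟩` of `F` (products written left-to-right, so
`x_0x_2` is the Lean element `x 2 * x 0`). -/
def G : Subgroup (Equiv.Perm I) := Subgroup.closure {x 2 * x 0, x 2 * x 1}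

/-- Jones' subgroup `F⃗ = ⟨x_0x_1, x_1x_2, x_2x_3⟩` of `F` (products written left-to-right). -/
def JonesF : Subgroup (Equiv.Perm I) := Subgroup.closure {x 1 * x 0, x 2 * x 1, x 3 * x 2}

lemma x_mem_F (i : ℕ) : x i ∈ F := by
  have h0 : x 0 ∈ F := Subgroup.subset_closure (by simp)
  have h1 : x 1 ∈ F := Subgroup.subset_closure (by simp)
  have hx0 : x₀ ∈ F := by simpa [x] using h0
  have hx1 : x₁ ∈ F := by simpa [x] using h1
  rcases Nat.eq_zero_or_pos i with h | h
  · subst h; exact h0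
  · have : x i = x₀ ^ (i-1) * x₁ * (x₀ ^ (i-1))⁻¹ := by
      simp [x, Nat.pos_iff_ne_zero.mp h]
    rw [this]
    exact mul_mem (mul_mem (pow_mem hx0 _) hx1) (inv_mem (pow_mem hx0 _))

lemma y0_mem_G : x 2 * x 0 ∈ G := Subgroup.subset_closure (by simp)

lemma y1_mem_G : x 2 * x 1 ∈ G := Subgroup.subset_closure (by simp)

/-- The length `|w|` of an element of `F`: the minimal `n` such that `w` is a product of `n`
elements of `{x_i^{±1} : i ≥ 0}`.  This equals the length of the normal form of `w`. -/
def len (w : Equiv.Perm I) : ℕ :=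
  sInf {n | ∃ l : List (Equiv.Perm I), l.length = n ∧
    (∀ a ∈ l, ∃ i : ℕ, a = x i ∨ a = (x i)⁻¹) ∧ l.prod = w}

/-- The element of `F` given by the positive word `x_{i_1} x_{i_2} ⋯ x_{i_n}` (composition from
left to right), where `l = [i_1, i_2, …, i_n]`.  Since Lean's multiplication of permutations is
composition from right to left, this is the Lean product of the reversed list of letters. -/
def pp (l : List ℕ) : Equiv.Perm I := ((l.map x).reverse).prod

/-- `l = [i_1, …, i_n]` encodes a *block*: a positive normal form `x_{i_1}⋯x_{i_n}`
(so `i_1 ≤ ⋯ ≤ i_n`) with `i_1 ≠ i_n` and `i_j < i_1 + j` for all `j = 1, …, n`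
(here with 0-based indexing: `l[k] < l[0] + k + 1`). -/
def IsBlock (l : List ℕ) : Prop :=
  l ≠ [] ∧ l.Pairwise (· ≤ ·) ∧ l.headI ≠ l.getLastD 0 ∧
    ∀ k < l.length, l.getD k 0 < l.headI + k + 1

/-- The double coset `F⃗ a F⃗` of Jones' subgroup.  (As a set this does not depend on the
composition convention, since `u, v` range over all of `F⃗`.) -/
def dCoset (a : Equiv.Perm I) : Set (Equiv.Perm I) :=
  {w | ∃ u ∈ JonesF, ∃ v ∈ JonesF, w = v * a * u}

/-- A real number is dyadic if it has the form `a / 2^n` with `a, n` natural numbers. -/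
def IsDyadic (α : ℝ) : Prop := ∃ (a : ℕ) (n : ℕ), α = a / 2^n

/-- The subgroup of all permutations fixing every point of `U`. -/
def fixing (U : Set ℝ) : Subgroup (Equiv.Perm I) where
  carrier := {g | ∀ t : I, (t : ℝ) ∈ U → g t = t}
  one_mem' := fun _ _ => rfl
  mul_mem' := by
    intro a b ha hb t ht
    simp only [Equiv.Perm.mul_apply]
    rw [hb t ht, ha t ht]
  inv_mem' := by
    intro a ha t ht
    conv_lhs => rw [← ha t ht]
    exact a.symm_apply_apply t

/-- `H_U`: the stabilizer in `F` of the finite set `U ⊂ (0,1)`, i.e. the subgroup of all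
elements of `F` fixing every point of `U`. -/
def HU (U : Set ℝ) : Subgroup (Equiv.Perm I) := F ⊓ fixing U


-- Auxiliary explicit piecewise forms of x_2, x_3, x_4
def x2f (t : ℝ) : ℝ :=
  if t ≤ 3/4 then t else if t ≤ 13/16 then 2*t - 3/4 else if t ≤ 7/8 then t + 1/16 else t/2 + 1/2

def x3f (t : ℝ) : ℝ :=
  if t ≤ 7/8 then t else if t ≤ 29/32 then 2*t - 7/8 else if t ≤ 15/16 then t + 1/32 else t/2 + 1/2

def x4f (t : ℝ) : ℝ :=
  if t ≤ 15/16 then t else if t ≤ 61/64 then 2*t - 15/16 else if t ≤ 31/32 then t + 1/64 else t/2 + 1/2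

lemma x0_eq : x 0 = x₀ := by simp [x]

lemma x1_eq : x 1 = x₁ := by simp [x]

lemma x2_eq : x 2 = x₀ * x₁ * x₀⁻¹ := by simp [x]

lemma x1_apply (t : I) : ((x 1 t : I) : ℝ) = x1fun t := by rw [x1_eq]; rfl

set_option maxHeartbeats 4000000 in
lemma x2_apply (t : I) : ((x 2 t : I) : ℝ) = x2f t := by
  rw [x2_eq]
  show x0fun (x1fun (x0inv t.1)) = x2f t.1
  obtain ⟨h0, h1⟩ := Set.mem_Icc.mp t.2
  simp only [x0fun, x1fun, x0inv, x2f]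
  split_ifs <;> linarith

lemma x₀_apply (t : I) : ((x₀ t : I) : ℝ) = x0fun t := rfl
lemma x₀inv_apply (t : I) : ((x₀⁻¹ t : I) : ℝ) = x0inv t := rfl

lemma xsucc (m : ℕ) (hm : 1 ≤ m) : x (m+1) = x 0 * x m * (x 0)⁻¹ := by
  obtain ⟨m', rfl⟩ : ∃ m', m = m'+1 := ⟨m-1, by omega⟩
  simp only [x]
  norm_num [pow_succ']
  group

lemma x3_eq : x 3 = x₀ * x 2 * x₀⁻¹ := by rw [xsucc 2 (by omega), x0_eq]

lemma x4_eq : x 4 = x₀ * x 3 * x₀⁻¹ := by rw [xsucc 3 (by omega), x0_eq]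

set_option maxHeartbeats 4000000 in
lemma x3_apply (t : I) : ((x 3 t : I) : ℝ) = x3f t := by
  rw [x3_eq]
  simp only [Equiv.Perm.mul_apply]
  rw [x₀_apply, x2_apply, x₀inv_apply]
  obtain ⟨h0, h1⟩ := Set.mem_Icc.mp t.2
  simp only [x0fun, x2f, x0inv, x3f]
  split_ifs <;> linarith

set_option maxHeartbeats 4000000 in
lemma x4_apply (t : I) : ((x 4 t : I) : ℝ) = x4f t := by
  rw [x4_eq]
  simp only [Equiv.Perm.mul_apply]
  rw [x₀_apply, x3_apply, x₀inv_apply]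
  obtain ⟨h0, h1⟩ := Set.mem_Icc.mp t.2
  simp only [x0fun, x3f, x0inv, x4f]
  split_ifs <;> linarith

set_option maxHeartbeats 4000000 in
lemma R12 : x 1 * x 2 = x 3 * x 1 := by
  apply Equiv.ext; intro t
  apply Subtype.ext
  simp only [Equiv.Perm.mul_apply]
  rw [x1_apply, x2_apply, x3_apply, x1_apply]
  obtain ⟨h0, h1⟩ := Set.mem_Icc.mp t.2
  simp only [x1fun, x2f, x3f]
  split_ifs <;> linarith

set_option maxHeartbeats 4000000 in
lemma R13 : x 1 * x 3 = x 4 * x 1 := by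
  apply Equiv.ext; intro t
  apply Subtype.ext
  simp only [Equiv.Perm.mul_apply]
  rw [x1_apply, x3_apply, x4_apply, x1_apply]
  obtain ⟨h0, h1⟩ := Set.mem_Icc.mp t.2
  simp only [x1fun, x3f, x4f]
  split_ifs <;> linarith

section GroupGlue
variable {Gp : Type*} [Group Gp]

lemma conj_rel (g a b c a' b' c' : Gp) (ha : a' = g*a*g⁻¹) (hb : b' = g*b*g⁻¹)
    (hc : c' = g*c*g⁻¹) (h : a*b = c*a) : a'*b' = c'*a' := by
  subst ha hb hc
  calc g*a*g⁻¹*(g*b*g⁻¹) = g*(a*b)*g⁻¹ := by group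
  _ = g*(c*a)*g⁻¹ := by rw [h]
  _ = g*c*g⁻¹*(g*a*g⁻¹) := by group

lemma grp_step (a b c d e f : Gp) (h1 : a * b = c * a) (h2 : a * d = e * a)
    (h3 : b * d = e * b) (h4 : c * e = f * c) : a * e = f * a := by
  have h5 : (a * b) * d = (a * e) * b := by
    calc (a*b)*d = a*(b*d) := mul_assoc _ _ _
    _ = a*(e*b) := by rw [h3]
    _ = (a*e)*b := (mul_assoc _ _ _).symm
  have l : (a*b)*d = (f*a)*b := by
    calc (a*b)*d = c*(a*d) := by rw [h1, mul_assoc]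
    _ = c*(e*a) := by rw [h2]
    _ = (c*e)*a := (mul_assoc _ _ _).symm
    _ = (f*c)*a := by rw [h4]
    _ = f*(c*a) := mul_assoc _ _ _
    _ = f*(a*b) := by rw [← h1]
    _ = (f*a)*b := (mul_assoc _ _ _).symm
  exact mul_right_cancel (h5.symm.trans l)

lemma g1 (j p p' a a' : Gp) (h1 : j * p = p' * j) (h2 : j * a = a' * j) :
    j * (p * a) = (p' * a') * j := by
  calc j*(p*a) = (j*p)*a := (mul_assoc _ _ _).symm
  _ = (p'*j)*a := by rw [h1]
  _ = p'*(j*a) := mul_assoc _ _ _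
  _ = p'*(a'*j) := by rw [h2]
  _ = (p'*a')*j := (mul_assoc _ _ _).symm

lemma g2 (p a u v X : Gp) (h1 : a * u = v * a) (h2 : p * v = X * p) :
    (p*a)*u = X*(p*a) := by
  calc (p*a)*u = p*(a*u) := mul_assoc _ _ _
  _ = p*(v*a) := by rw [h1]
  _ = (p*v)*a := (mul_assoc _ _ _).symm
  _ = (X*p)*a := by rw [h2]
  _ = X*(p*a) := mul_assoc _ _ _

lemma g3 (A J J' : Gp) (h : A * J = J' * A) : A * J⁻¹ = J'⁻¹ * A := by
  have h2 := congrArg (fun z => J'⁻¹ * z * J⁻¹) h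
  simp only [mul_assoc, mul_inv_cancel, mul_one, inv_mul_cancel, one_mul] at h2
  rw [← mul_assoc, inv_mul_cancel, one_mul] at h2
  exact h2.symm

lemma g4 (J P P' : Gp) (h : J * P = P' * J) : P * J⁻¹ = J⁻¹ * P' := by
  have h2 := congrArg (fun z => J⁻¹ * z * J⁻¹) h
  simp only [mul_assoc, mul_inv_cancel, mul_one, inv_mul_cancel, one_mul] at h2
  rw [← mul_assoc, inv_mul_cancel, one_mul] at h2
  exact h2

end GroupGlue

lemma rel1 : ∀ n, 2 ≤ n → x 1 * x n = x (n+1) * x 1 := by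
  intro n
  induction n using Nat.strong_induction_on with
  | _ n ih =>
    intro hn
    rcases Nat.lt_or_ge n 4 with h4 | h4
    · interval_cases n
      · exact R12
      · exact R13
    · obtain ⟨m, rfl⟩ : ∃ m, n = m + 4 := ⟨n - 4, by omega⟩
      have ih1 : x 1 * x (m+2) = x (m+3) * x 1 := ih (m+2) (by omega) (by omega)
      have ih2 : x 1 * x (m+3) = x (m+4) * x 1 := ih (m+3) (by omega) (by omega)
      have c1 : x 2 * x (m+3) = x (m+4) * x 2 :=
        conj_rel (x 0) (x 1) (x (m+2)) (x (m+3)) (x 2) (x (m+3)) (x (m+4))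
          (by rw [xsucc 1 (by omega)]) (by rw [xsucc (m+2) (by omega)])
          (by rw [xsucc (m+3) (by omega)]) ih1
      have c2 : x 3 * x (m+4) = x (m+5) * x 3 :=
        conj_rel (x 0) (x 2) (x (m+3)) (x (m+4)) (x 3) (x (m+4)) (x (m+5))
          (by rw [xsucc 2 (by omega)]) (by rw [xsucc (m+3) (by omega)])
          (by rw [xsucc (m+4) (by omega)]) c1
      exact grp_step (x 1) (x 2) (x 3) (x (m+3)) (x (m+4)) (x (m+5)) R12 ih2 c1 c2

lemma rel : ∀ k n, k < n → x k * x n = x (n+1) * x k := by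
  intro k
  induction k using Nat.strong_induction_on with
  | _ k ih =>
    intro n h
    rcases k with _ | k
    · have hs := xsucc n (by omega)
      rw [hs]; group
    · rcases k with _ | m
      · exact rel1 n h
      · obtain ⟨n', rfl⟩ : ∃ n', n = n' + 1 := ⟨n - 1, by omega⟩
        have prev : x (m+1) * x n' = x (n'+1) * x (m+1) := ih (m+1) (by omega) n' (by omega)
        exact conj_rel (x 0) (x (m+1)) (x n') (x (n'+1)) (x (m+2)) (x (n'+1)) (x (n'+2))
          (by rw [xsucc (m+1) (by omega)]) (by rw [xsucc n' (by omega)])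
          (by rw [xsucc (n'+1) (by omega)]) prev

lemma pp_nil : pp [] = 1 := rfl

lemma pp_cons (a : ℕ) (l : List ℕ) : pp (a :: l) = pp l * x a := by
  simp [pp]

lemma comm1 : ∀ (l : List ℕ) (j : ℕ), (∀ i ∈ l, j < i) →
    x j * pp l = pp (l.map (· + 1)) * x j := by
  intro l
  induction l with
  | nil => intro j _; simp [pp]
  | cons a l ihl =>
    intro j h
    rw [pp_cons, List.map_cons, pp_cons]
    exact g1 (x j) (pp l) (pp (l.map (· + 1))) (x a) (x (a+1))
      (ihl j (fun i hi => h i (List.mem_cons_of_mem _ hi)))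
      (rel j a (h a List.mem_cons_self))

lemma comm2 : ∀ (l : List ℕ) (j : ℕ), (∀ m < l.length, l.getD m 0 < j + m) →
    pp l * (x j)⁻¹ = (x (j + l.length))⁻¹ * pp l := by
  intro l
  induction l with
  | nil => intro j _; simp [pp]
  | cons a l ihl =>
    intro j h
    have ha : a < j := by have := h 0 (by simp); simpa using this
    have hl : ∀ m < l.length, l.getD m 0 < (j+1) + m := by
      intro m hm
      have := h (m+1) (by simp; omega)
      simp only [List.getD_cons_succ] at this
      omega
    have IH := ihl (j+1) hl
    have hrel : x a * (x j)⁻¹ = (x (j+1))⁻¹ * x a := g3 _ _ _ (rel a j ha)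
    have hidx : (j+1) + l.length = j + (a :: l).length := by simp; omega
    rw [pp_cons, ← hidx]
    exact g2 (pp l) (x a) ((x j)⁻¹) ((x (j+1))⁻¹) ((x ((j+1) + l.length))⁻¹) hrel IH

/-- Let `B = x_{i_1}⋯x_{i_n}` be a block (encoded by the list `l`) and let
`j ≥ 0` with `j ≠ i_1`.  Then there are `k, r ≥ 0` such that `x_j⁻¹ B = B' x_r⁻¹` in `F`,
where `B' = x_{i_1+k}⋯x_{i_n+k}` is the translation of `B` by `k`.  (In Lean's right-to-left
convention the paper equation reads `pp l * (x j)⁻¹ = (x r)⁻¹ * pp (l.map (· + k))`.) -/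
theorem stmt6 (l : List ℕ) (hB : IsBlock l) (j : ℕ) (hj : j ≠ l.headI) :
    ∃ k r : ℕ, pp l * (x j)⁻¹ = (x r)⁻¹ * pp (l.map (· + k)) := by
  obtain ⟨hne, hsort, _, hlt⟩ := hB
  rcases lt_or_gt_of_ne hj with h | h
  · refine ⟨1, j, ?_⟩
    cases l with
    | nil => exact absurd rfl hne
    | cons a l' =>
      rw [List.pairwise_cons] at hsort
      have hall : ∀ i ∈ (a :: l'), j < i := by
        intro i hi
        rcases List.mem_cons.mp hi with rfl | hi'
        · exact h
        · exact lt_of_lt_of_le h (hsort.1 i hi')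
      exact g4 _ _ _ (comm1 _ j hall)
  · refine ⟨0, j + l.length, ?_⟩
    have hmap : l.map (· + 0) = l := by simp
    rw [hmap]
    exact comm2 l j (fun m hm => by have := hlt m hm; omega)
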